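/- In T_{3m}, the set of elements whose order is a power of 3 (including the identity) equals {1} ∪ ⟨x⟩y ∪ ⟨x⟩y^{-1}; every element x^i y^{±1} has order 3 and every nonidentity element x^i has order coprime to 3. -/

import Mathlib

/-- Relations of the presentation `T_{3m} = ⟨x, y | x^m = y^3 = 1, y⁻¹xy = x^t⟩`. -/
def T3mRels (m t : ℕ) : Set (FreeGroup (Fin 2)) :=
  {FreeGroup.of 0 ^ m, FreeGroup.of 1 ^ 3,
   (FreeGroup.of 1)⁻¹ * FreeGroup.of 0 * FreeGroup.of 1 * (FreeGroup.of 0 ^ t)⁻¹}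

/-- The group `T_{3m}` given by the presentation `⟨x, y | x^m = y^3 = 1, y⁻¹xy = x^t⟩`. -/
abbrev T3m (m t : ℕ) : Type := PresentedGroup (T3mRels m t)

/-- The generator `x` of `T_{3m}`. -/
def xg (m t : ℕ) : T3m m t := PresentedGroup.of 0

/-- The generator `y` of `T_{3m}`. -/
def yg (m t : ℕ) : T3m m t := PresentedGroup.of 1

/-- In `T_{3m}`, the set of elements of 3-power order (including `1`) is
`{1} ∪ ⟨x⟩y ∪ ⟨x⟩y⁻¹`; each `xⁱy^{±1}` has order 3 and each nonidentity `xⁱ` has order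
coprime to 3. -/
theorem T3m_three_elements (m t k : ℕ) (ht1 : 1 ≤ t) (hm : m = 3 * k + 1)
    (ht : t ^ 3 % m = 1 % m) (hgcd : Nat.gcd m (t - 1) = 1) :
    ({g : T3m m t | ∃ n : ℕ, orderOf g = 3 ^ n}
      = {1} ∪ {g : T3m m t | ∃ i : ℤ, g = xg m t ^ i * yg m t}
          ∪ {g : T3m m t | ∃ i : ℤ, g = xg m t ^ i * (yg m t)⁻¹}) ∧
    (∀ i : ℤ, orderOf (xg m t ^ i * yg m t) = 3 ∧ orderOf (xg m t ^ i * (yg m t)⁻¹) = 3) ∧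
    (∀ i : ℤ, xg m t ^ i ≠ 1 → Nat.Coprime (orderOf (xg m t ^ i)) 3) := by
  set x := xg m t with hxdef
  set y := yg m t with hydef
  -- relations
  have hrel : ∀ r ∈ T3mRels m t, PresentedGroup.mk (T3mRels m t) r = 1 := fun r hr =>
    (QuotientGroup.eq_one_iff r).mpr (Subgroup.subset_normalClosure hr)
  have hxm : x ^ m = 1 := by
    have h := hrel _ (Set.mem_insert _ _)
    simpa [hxdef, xg, PresentedGroup.of] using h
  have hy3 : y ^ 3 = 1 := by
    have h := hrel _ (Set.mem_insert_of_mem _ (Set.mem_insert _ _))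
    simpa [hydef, yg, PresentedGroup.of] using h
  have hc : y⁻¹ * x * y = x ^ t := by
    have h := hrel _ (Set.mem_insert_of_mem _ (Set.mem_insert_of_mem _ rfl))
    simp only [map_mul, map_inv, map_pow] at h
    have h' : y⁻¹ * x * y * (x ^ t)⁻¹ = 1 := by
      simpa [hxdef, hydef, xg, yg, PresentedGroup.of] using h
    exact mul_inv_eq_one.mp h'
  -- integer-power basics
  have hxmz : x ^ (m : ℤ) = 1 := by rw [zpow_natCast]; exact hxm
  have hx1 : ∀ c : ℤ, (m : ℤ) ∣ c → x ^ c = 1 := by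
    rintro c ⟨d, rfl⟩
    rw [zpow_mul, hxmz, one_zpow]
  have hxeq : ∀ a b : ℤ, (m : ℤ) ∣ (a - b) → x ^ a = x ^ b := by
    intro a b h
    rw [show a = b + (a - b) by ring, zpow_add, hx1 _ h, mul_one]
  -- arithmetic facts
  have htm : (m : ℤ) ∣ (t : ℤ) ^ 3 - 1 := by
    have h : (m : ℤ) ∣ (1 : ℤ) - (t : ℤ) ^ 3 := by
      have h2 := (show Nat.ModEq m (t ^ 3) 1 from ht).dvd
      push_cast at h2
      exact h2
    have h3 : (m : ℤ) ∣ -((1 : ℤ) - (t : ℤ) ^ 3) := dvd_neg.mpr h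
    rwa [neg_sub] at h3
  have hco : IsCoprime (m : ℤ) ((t : ℤ) - 1) := by
    have h := Nat.isCoprime_iff_coprime.mpr hgcd
    have he : ((t - 1 : ℕ) : ℤ) = (t : ℤ) - 1 := by omega
    rwa [he] at h
  have hmd : (m : ℤ) ∣ (t : ℤ) ^ 2 + t + 1 := by
    have h : (m : ℤ) ∣ ((t : ℤ) - 1) * ((t : ℤ) ^ 2 + t + 1) := by
      rw [show ((t : ℤ) - 1) * ((t : ℤ) ^ 2 + t + 1) = (t : ℤ) ^ 3 - 1 by ring]
      exact htm
    exact hco.dvd_of_dvd_mul_left h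
  -- conjugation lemmas
  have hconj : ∀ a : ℤ, y⁻¹ * x ^ a * y = x ^ ((t : ℤ) * a) := by
    intro a
    have h1 : (y⁻¹ * x * y⁻¹⁻¹) ^ a = y⁻¹ * x ^ a * y⁻¹⁻¹ := conj_zpow ..
    rw [inv_inv] at h1
    rw [← h1, hc, ← zpow_natCast x t, ← zpow_mul]
  have hinv : ∀ a : ℤ, y⁻¹ * x ^ a = x ^ ((t : ℤ) * a) * y⁻¹ := by
    intro a; rw [← hconj a]; group
  have hxy : ∀ a : ℤ, x ^ a * y = y * x ^ ((t : ℤ) * a) := by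
    intro a; rw [← hconj a]; group
  have hyx : ∀ a : ℤ, y * x ^ a = x ^ ((t : ℤ) ^ 2 * a) * y := by
    intro a
    rw [hxy ((t : ℤ) ^ 2 * a)]
    congr 1
    apply hxeq
    rw [show a - (t : ℤ) * ((t : ℤ) ^ 2 * a) = -(((t : ℤ) ^ 3 - 1) * a) by ring]
    exact dvd_neg.mpr (htm.mul_right a)
  have hyconj : ∀ a : ℤ, y * x ^ a * y⁻¹ = x ^ ((t : ℤ) ^ 2 * a) := by
    intro a; rw [hyx]; group
  -- cube of x^a * y is 1
  have cube : ∀ a : ℤ, (x ^ a * y) ^ 3 = 1 := by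
    intro a
    have e1 : (x ^ a * y) ^ 3
        = x ^ a * (y * x ^ a * y⁻¹) * (y * (y * x ^ a * y⁻¹) * y⁻¹) * y ^ 3 := by
      rw [pow_succ, pow_succ, pow_succ, pow_zero, one_mul]; group
    rw [e1]
    simp only [hyconj]
    rw [hy3, mul_one, ← zpow_add, ← zpow_add]
    apply hx1
    have h1 : (m : ℤ) ∣ (1 + (t : ℤ) ^ 2 + (t : ℤ) ^ 4) * a := by
      have he : (1 + (t : ℤ) ^ 2 + (t : ℤ) ^ 4)
          = ((t : ℤ) ^ 2 + t + 1) + (t : ℤ) * ((t : ℤ) ^ 3 - 1) := by ring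
      rw [he]
      exact (dvd_add hmd (htm.mul_left _)).mul_right a
    have he2 : a + (t : ℤ) ^ 2 * a + (t : ℤ) ^ 2 * ((t : ℤ) ^ 2 * a)
        = (1 + (t : ℤ) ^ 2 + (t : ℤ) ^ 4) * a := by ring
    rw [he2]
    exact h1
  -- homomorphism to Z/3 to show nontriviality
  have hf : ∀ r ∈ T3mRels m t,
      FreeGroup.lift (fun i : Fin 2 => if i = 0 then (1 : Multiplicative (ZMod 3))
        else Multiplicative.ofAdd 1) r = 1 := by
    intro r hr
    rcases hr with rfl | rfl | rfl
    · simp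
    · rw [map_pow, FreeGroup.lift_apply_of]
      decide
    · simp
  set φ := PresentedGroup.toGroup hf with hφdef
  have hφx : φ x = 1 := by
    rw [hxdef]; exact PresentedGroup.toGroup.of hf
  have hφy : φ y = Multiplicative.ofAdd 1 := by
    rw [hydef]; exact PresentedGroup.toGroup.of hf
  have hne : ∀ a : ℤ, x ^ a * y ≠ 1 := by
    intro a h
    have h2 := congrArg φ h
    rw [map_mul, map_zpow, hφx, hφy, one_zpow, one_mul, map_one φ] at h2
    exact (by decide : (Multiplicative.ofAdd (1 : ZMod 3)) ≠ 1) h2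
  haveI : Fact (Nat.Prime 3) := ⟨by norm_num⟩
  have ho1 : ∀ a : ℤ, orderOf (x ^ a * y) = 3 := fun a => orderOf_eq_prime (cube a) (hne a)
  have ho2 : ∀ a : ℤ, orderOf (x ^ a * y⁻¹) = 3 := by
    intro a
    have h1 : (x ^ (-((t : ℤ) ^ 2 * a)) * y)⁻¹ = x ^ a * y⁻¹ := by
      rw [mul_inv_rev, zpow_neg, inv_inv, hinv]
      congr 1
      apply hxeq
      rw [show (t : ℤ) * ((t : ℤ) ^ 2 * a) - a = ((t : ℤ) ^ 3 - 1) * a by ring]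
      exact htm.mul_right a
    rw [← h1, orderOf_inv, ho1]
  -- commuting y-powers past x-powers
  have hcomm : ∀ j a : ℤ, ∃ c : ℤ, y ^ j * x ^ a = x ^ c * y ^ j := by
    intro j
    induction j using Int.induction_on with
    | zero => intro a; exact ⟨a, by simp⟩
    | succ n ih =>
      intro a
      obtain ⟨c, hcc⟩ := ih ((t : ℤ) ^ 2 * a)
      refine ⟨c, ?_⟩
      calc y ^ ((n : ℤ) + 1) * x ^ a = y ^ (n : ℤ) * (y * x ^ a) := by
            rw [zpow_add, zpow_one, mul_assoc]
        _ = y ^ (n : ℤ) * (x ^ ((t : ℤ) ^ 2 * a) * y) := by rw [hyx]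
        _ = (y ^ (n : ℤ) * x ^ ((t : ℤ) ^ 2 * a)) * y := by rw [mul_assoc]
        _ = (x ^ c * y ^ (n : ℤ)) * y := by rw [hcc]
        _ = x ^ c * y ^ ((n : ℤ) + 1) := by rw [zpow_add, zpow_one, mul_assoc]
    | pred n ih =>
      intro a
      obtain ⟨c, hcc⟩ := ih ((t : ℤ) * a)
      refine ⟨c, ?_⟩
      calc y ^ (-(n : ℤ) - 1) * x ^ a = y ^ (-(n : ℤ)) * (y⁻¹ * x ^ a) := by
            rw [sub_eq_add_neg, zpow_add, zpow_neg_one, mul_assoc]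
        _ = y ^ (-(n : ℤ)) * (x ^ ((t : ℤ) * a) * y⁻¹) := by rw [hinv]
        _ = (y ^ (-(n : ℤ)) * x ^ ((t : ℤ) * a)) * y⁻¹ := by rw [mul_assoc]
        _ = (x ^ c * y ^ (-(n : ℤ))) * y⁻¹ := by rw [hcc]
        _ = x ^ c * y ^ (-(n : ℤ) - 1) := by
            rw [sub_eq_add_neg, zpow_add, zpow_neg_one, mul_assoc]
  -- every element has the form x^i * y^j
  have hgen : ∀ g : T3m m t, ∃ i j : ℤ, g = x ^ i * y ^ j := by
    intro g
    have hg : g ∈ Subgroup.closure (Set.range (PresentedGroup.of : Fin 2 → T3m m t)) := by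
      rw [PresentedGroup.closure_range_of]; trivial
    refine Subgroup.closure_induction ?_ ?_ ?_ ?_ hg
    · rintro g' ⟨i, rfl⟩
      fin_cases i
      · exact ⟨1, 0, by simp [hxdef, xg]⟩
      · exact ⟨0, 1, by simp [hydef, yg]⟩
    · exact ⟨0, 0, by simp⟩
    · rintro g1 g2 _ _ ⟨i1, j1, rfl⟩ ⟨i2, j2, rfl⟩
      obtain ⟨c, hcc⟩ := hcomm j1 i2
      refine ⟨i1 + c, j1 + j2, ?_⟩
      calc x ^ i1 * y ^ j1 * (x ^ i2 * y ^ j2)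
          = x ^ i1 * (y ^ j1 * x ^ i2) * y ^ j2 := by group
        _ = x ^ i1 * (x ^ c * y ^ j1) * y ^ j2 := by rw [hcc]
        _ = x ^ (i1 + c) * y ^ (j1 + j2) := by rw [zpow_add, zpow_add]; group
    · rintro g1 _ ⟨i, j, rfl⟩
      obtain ⟨c, hcc⟩ := hcomm (-j) (-i)
      refine ⟨c, -j, ?_⟩
      rw [mul_inv_rev, ← zpow_neg, ← zpow_neg, hcc]
  -- y^2 = y⁻¹ and y^(3:ℤ) = 1
  have hy3z : y ^ (3 : ℤ) = 1 := by rw [show ((3:ℤ)) = ((3:ℕ):ℤ) by norm_num, zpow_natCast, hy3]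
  have hy2 : y ^ (2 : ℤ) = y⁻¹ := by
    apply eq_inv_of_mul_eq_one_left
    have h2 : y ^ (2 : ℤ) * y = y ^ (3 : ℤ) := by group
    rw [h2, hy3z]
  have hdvdm : ∀ i : ℤ, orderOf (x ^ i) ∣ m := by
    intro i
    apply orderOf_dvd_of_pow_eq_one
    rw [← zpow_natCast (x ^ i), ← zpow_mul]
    exact hx1 _ ⟨i, by ring⟩
  refine ⟨?_, fun i => ⟨ho1 i, ho2 i⟩, ?_⟩
  · ext g
    simp only [Set.mem_setOf_eq, Set.mem_union, Set.mem_singleton_iff]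
    constructor
    · rintro ⟨n, hn⟩
      obtain ⟨i, j, rfl⟩ := hgen g
      have hj : y ^ j = y ^ (j % 3) := by
        conv_lhs => rw [show j = 3 * (j / 3) + j % 3 from (Int.mul_ediv_add_emod j 3).symm]
        rw [zpow_add, zpow_mul, hy3z, one_zpow, one_mul]
      have h03 : j % 3 = 0 ∨ j % 3 = 1 ∨ j % 3 = 2 := by omega
      rcases h03 with h | h | h
      · left; left
        rw [hj, h, zpow_zero, mul_one] at hn ⊢
        have hdvd := hdvdm i
        rw [hn] at hdvd
        have h3 : ¬ (3 ∣ m) := by omega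
        have hn0 : n = 0 := by
          by_contra h0
          exact h3 (dvd_trans (dvd_pow_self 3 h0) hdvd)
        rw [hn0, pow_zero] at hn
        exact orderOf_eq_one_iff.mp hn
      · left; right
        exact ⟨i, by rw [hj, h, zpow_one]⟩
      · right
        exact ⟨i, by rw [hj, h, hy2]⟩
    · rintro ((rfl | ⟨i, rfl⟩) | ⟨i, rfl⟩)
      · exact ⟨0, by simp⟩
      · exact ⟨1, by rw [pow_one]; exact ho1 i⟩
      · exact ⟨1, by rw [pow_one]; exact ho2 i⟩
  · intro i _
    have hdvd := hdvdm i
    have hc3 : Nat.Coprime 3 m := (Nat.prime_three.coprime_iff_not_dvd).mpr (by omega)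
    exact Nat.Coprime.coprime_dvd_left hdvd hc3.symm
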